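/- Normalizing the members of an ACI list does not change the normal form: ⌈·(⌈t₁⌉,…,⌈t_m⌉)⌉ = ⌈·(t₁,…,t_m)⌉. -/

import Mathlib

inductive BinOp : Type
  | enc | aenc | pair | sig
deriving DecidableEq

inductive Term : Type
  | atom : ℕ → Term
  | var  : ℕ → Term
  | bin  : BinOp → Term → Term → Term
  | priv : Term → Term
  | aci  : List Term → Term

def Term.subst (σ : ℕ → Term) : Term → Term
  | .atom a => .atom a
  | .var x => σ x
  | .bin o p q => .bin o (p.subst σ) (q.subst σ)
  | .priv t => .priv (t.subst σ)
  | .aci L => .aci (L.attach.map fun p => p.1.subst σ)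
decreasing_by
  all_goals simp_wf
  all_goals first
    | omega
    | (have := List.sizeOf_lt_of_mem p.2; omega)

def Term.elems : Term → Set Term
  | .aci L => ⋃ p ∈ L.attach, p.1.elems
  | t => {t}
decreasing_by
  have := List.sizeOf_lt_of_mem p.2; simp_wf; omega

def Term.subDag : Term → Set Term
  | .atom a => {.atom a}
  | .var x => {.var x}
  | .bin o p q => insert (.bin o p q) (p.subDag ∪ q.subDag)
  | .priv t => insert (.priv t) t.subDag
  | .aci L => insert (.aci L) (⋃ p ∈ L.attach, p.1.subDag)
decreasing_by
  all_goals simp_wf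
  all_goals first
    | omega
    | (have := List.sizeOf_lt_of_mem p.2; omega)

def Term.vars (t : Term) : Set ℕ := {x | Term.var x ∈ t.subDag}

def Term.Ground (t : Term) : Prop := t.vars = ∅

/-- Specification of the quasi-subterm function `sub`. -/
structure SubSpec where
  sub : Term → Set Term
  sub_atom : ∀ a, sub (.atom a) = {.atom a}
  sub_var : ∀ x, sub (.var x) = {.var x}
  sub_priv : ∀ t, sub (.priv t) = insert (.priv t) (sub t)
  sub_bin : ∀ o p q, sub (.bin o p q) = insert (.bin o p q) (sub p ∪ sub q)
  sub_aci : ∀ L, sub (.aci L) = insert (.aci L) (⋃ p ∈ (Term.aci L).elems, sub p)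

/-- Specification of the ACI normal form with respect to a strict total order `lt`. -/
structure NormSpec (lt : Term → Term → Prop) where
  nf : Term → Term
  nf_atom : ∀ a, nf (.atom a) = .atom a
  nf_var  : ∀ x, nf (.var x) = .var x
  nf_bin  : ∀ o p q, nf (.bin o p q) = .bin o (nf p) (nf q)
  nf_priv : ∀ t, nf (.priv t) = .priv (nf t)
  nf_aci_single : ∀ L t', nf '' (Term.aci L).elems = {t'} → nf (.aci L) = t'
  nf_aci : ∀ L, (¬ ∃ t', nf '' (Term.aci L).elems = {t'}) →
      ∃ L' : List Term, List.Pairwise lt L' ∧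
        (∀ s, s ∈ L' ↔ s ∈ nf '' (Term.aci L).elems) ∧ nf (.aci L) = .aci L'

/-- The derivable closure of a set `E` of terms under a deduction system `R`,
given as a set of rules (premises, conclusion): the least superset of `E`
closed under the rules. -/
inductive Der (R : Set (Set Term × Term)) (E : Set Term) : Term → Prop where
  | base {t : Term} : t ∈ E → Der R E t
  | step {l : Set Term} {r : Term} : (l, r) ∈ R → (∀ s ∈ l, Der R E s) → Der R E r

/-- The composition rules of the DY+ACI deduction system (for normal form `nf`). -/
inductive DYComp (nf : Term → Term) : Set Term → Term → Prop where
  | enc  (t₁ t₂ : Term) : DYComp nf {t₁, t₂} (nf (.bin .enc t₁ t₂))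
  | aenc (t₁ t₂ : Term) : DYComp nf {t₁, t₂} (nf (.bin .aenc t₁ t₂))
  | pair (t₁ t₂ : Term) : DYComp nf {t₁, t₂} (nf (.bin .pair t₁ t₂))
  | sig  (t₁ t₂ : Term) : DYComp nf {t₁, .priv t₂} (nf (.bin .sig t₁ (.priv t₂)))
  | aci  (L : List Term) (h : L ≠ []) : DYComp nf {t | t ∈ L} (nf (.aci L))

/-- The composition rules of DY+ACI other than the ACI-set construction rule. -/
inductive DYCompNoACI (nf : Term → Term) : Set Term → Term → Prop where
  | enc  (t₁ t₂ : Term) : DYCompNoACI nf {t₁, t₂} (nf (.bin .enc t₁ t₂))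
  | aenc (t₁ t₂ : Term) : DYCompNoACI nf {t₁, t₂} (nf (.bin .aenc t₁ t₂))
  | pair (t₁ t₂ : Term) : DYCompNoACI nf {t₁, t₂} (nf (.bin .pair t₁ t₂))
  | sig  (t₁ t₂ : Term) : DYCompNoACI nf {t₁, .priv t₂} (nf (.bin .sig t₁ (.priv t₂)))

/-- The decomposition rules of the DY+ACI deduction system. -/
inductive DYDecomp (nf : Term → Term) : Set Term → Term → Prop where
  | enc  (t₁ t₂ : Term) : DYDecomp nf {.bin .enc t₁ t₂, nf t₂} (nf t₁)
  | aenc (t₁ t₂ : Term) : DYDecomp nf {.bin .aenc t₁ t₂, nf (.priv t₂)} (nf t₁)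
  | fst  (t₁ t₂ : Term) : DYDecomp nf {.bin .pair t₁ t₂} (nf t₁)
  | snd  (t₁ t₂ : Term) : DYDecomp nf {.bin .pair t₁ t₂} (nf t₂)
  | aci  (L : List Term) (t : Term) (h : t ∈ L) : DYDecomp nf {.aci L} (nf t)

/-- The DY+ACI deduction system as a set of rules. -/
def DYACI (nf : Term → Term) : Set (Set Term × Term) :=
  {p | DYComp nf p.1 p.2 ∨ DYDecomp nf p.1 p.2}

/-- A ground substitution `σ` is a model of a constraint system
`S = {Eᵢ ▷ tᵢ}` if `⌈tᵢσ⌉` is derivable from `⌈Eᵢσ⌉` in DY+ACI. -/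
def Models (nf : Term → Term) (σ : ℕ → Term) (S : List (Set Term × Term)) : Prop :=
  ∀ c ∈ S, Der (DYACI nf) (nf '' ((fun t => t.subst σ) '' c.1)) (nf (c.2.subst σ))

/-- All terms occurring in a constraint system. -/
def termsOf (S : List (Set Term × Term)) : Set Term :=
  ⋃ c ∈ S, c.1 ∪ {c.2}

/-- DAG-subterms of a constraint system. -/
def subDagS (S : List (Set Term × Term)) : Set Term :=
  ⋃ t ∈ termsOf S, t.subDag

/-- Variables of a constraint system. -/
def varsS (S : List (Set Term × Term)) : Set ℕ :=
  {x | Term.var x ∈ subDagS S}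

/-- Applying a substitution to a constraint system. -/
def substS (θ : ℕ → Term) (S : List (Set Term × Term)) : List (Set Term × Term) :=
  S.map fun c => ((fun t => t.subst θ) '' c.1, c.2.subst θ)

/-- The domain of a substitution. -/
def dom (θ : ℕ → Term) : Set ℕ := {x | θ x ≠ .var x}


section AuxACI

variable {lt : Term → Term → Prop}

/-- `t` is not an ACI node. -/
def NAaci (t : Term) : Prop := ∀ L, t ≠ .aci L

lemma elems_aci (L : List Term) : (Term.aci L).elems = ⋃ t ∈ L, t.elems := by
  rw [Term.elems]; ext x; simp

lemma elems_na {t : Term} (h : NAaci t) : t.elems = {t} := by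
  cases t with
  | aci L => exact absurd rfl (h L)
  | atom a => rw [Term.elems] <;> simp
  | var x => rw [Term.elems] <;> simp
  | bin o p q => rw [Term.elems] <;> simp
  | priv s => rw [Term.elems] <;> simp

theorem sizeOf_mem_elems : ∀ (t : Term), ∀ s ∈ t.elems, sizeOf s ≤ sizeOf t
  | .aci L => by
      intro s hs
      rw [elems_aci] at hs
      simp only [Set.mem_iUnion] at hs
      obtain ⟨u, hu, hs⟩ := hs
      have h2 := List.sizeOf_lt_of_mem hu
      have h1 := sizeOf_mem_elems u s hs
      have : sizeOf (Term.aci L) = 1 + sizeOf L := by simp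
      omega
  | .atom a => by
      intro s hs
      rw [elems_na (fun L h => by cases h)] at hs
      rw [hs]
  | .var x => by
      intro s hs
      rw [elems_na (fun L h => by cases h)] at hs
      rw [hs]
  | .bin o p q => by
      intro s hs
      rw [elems_na (fun L h => by cases h)] at hs
      rw [hs]
  | .priv u => by
      intro s hs
      rw [elems_na (fun L h => by cases h)] at hs
      rw [hs]
termination_by t => sizeOf t
decreasing_by simp_wf; omega

theorem na_mem_elems : ∀ (t : Term), ∀ s ∈ t.elems, NAaci s
  | .aci L => by
      intro s hs
      rw [elems_aci] at hs
      simp only [Set.mem_iUnion] at hs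
      obtain ⟨u, hu, hs⟩ := hs
      have h2 := List.sizeOf_lt_of_mem hu
      exact na_mem_elems u s hs
  | .atom a => by
      intro s hs
      rw [elems_na (fun L h => by cases h)] at hs
      rw [hs]; exact fun L h => by cases h
  | .var x => by
      intro s hs
      rw [elems_na (fun L h => by cases h)] at hs
      rw [hs]; exact fun L h => by cases h
  | .bin o p q => by
      intro s hs
      rw [elems_na (fun L h => by cases h)] at hs
      rw [hs]; exact fun L h => by cases h
  | .priv u => by
      intro s hs
      rw [elems_na (fun L h => by cases h)] at hs
      rw [hs]; exact fun L h => by cases h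
termination_by t => sizeOf t
decreasing_by simp_wf; omega

lemma na_nf (N : NormSpec lt) {t : Term} (h : NAaci t) : NAaci (N.nf t) := by
  cases t with
  | aci L => exact absurd rfl (h L)
  | atom a => rw [N.nf_atom]; exact fun L h => by cases h
  | var x => rw [N.nf_var]; exact fun L h => by cases h
  | bin o p q => rw [N.nf_bin]; exact fun L h => by cases h
  | priv s => rw [N.nf_priv]; exact fun L h => by cases h

lemma sorted_unique (hlt : IsStrictTotalOrder Term lt) {L₁ L₂ : List Term}
    (h₁ : L₁.Pairwise lt) (h₂ : L₂.Pairwise lt) (hm : ∀ s, s ∈ L₁ ↔ s ∈ L₂) :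
    L₁ = L₂ := by
  haveI := hlt
  haveI : IsAntisymm Term lt :=
    ⟨fun a b hab hba => absurd (trans_of lt hab hba) (irrefl_of lt a)⟩
  have nd₁ : L₁.Nodup := h₁.imp fun {a b} hab => by intro e; subst e; exact irrefl_of lt a hab
  have nd₂ : L₂.Nodup := h₂.imp fun {a b} hab => by intro e; subst e; exact irrefl_of lt a hab
  exact List.Perm.eq_of_pairwise (fun a b _ _ hab hba => absurd (trans_of lt hab hba) (irrefl_of lt a)) h₁ h₂ ((List.perm_ext_iff_of_nodup nd₁ nd₂).2 hm)

theorem nf_key (hlt : IsStrictTotalOrder Term lt) (N : NormSpec lt) :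
    ∀ (t : Term), N.nf (N.nf t) = N.nf t ∧ N.nf '' (N.nf t).elems = N.nf '' t.elems
  | .atom a => by
      rw [N.nf_atom]; exact ⟨by rw [N.nf_atom], rfl⟩
  | .var x => by
      rw [N.nf_var]; exact ⟨by rw [N.nf_var], rfl⟩
  | .bin o p q => by
      have hp := (nf_key hlt N p).1
      have hq := (nf_key hlt N q).1
      have hid : N.nf (N.nf (.bin o p q)) = N.nf (.bin o p q) := by
        rw [N.nf_bin, N.nf_bin, hp, hq, ← N.nf_bin]
      refine ⟨hid, ?_⟩
      rw [elems_na (t := N.nf (.bin o p q)) (na_nf N (fun L h => by cases h)),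
        elems_na (t := Term.bin o p q) (fun L h => by cases h),
        Set.image_singleton, Set.image_singleton, hid]
  | .priv u => by
      have hu := (nf_key hlt N u).1
      have hid : N.nf (N.nf (.priv u)) = N.nf (.priv u) := by
        rw [N.nf_priv, N.nf_priv, hu, ← N.nf_priv]
      refine ⟨hid, ?_⟩
      rw [elems_na (t := N.nf (.priv u)) (na_nf N (fun L h => by cases h)),
        elems_na (t := Term.priv u) (fun L h => by cases h),
        Set.image_singleton, Set.image_singleton, hid]
  | .aci L => by
      have IH : ∀ s ∈ (Term.aci L).elems, N.nf (N.nf s) = N.nf s := by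
        intro s hs
        have h2 : sizeOf s < 1 + sizeOf L := by
          rw [elems_aci] at hs
          simp only [Set.mem_iUnion] at hs
          obtain ⟨u, hu, hs⟩ := hs
          have := List.sizeOf_lt_of_mem hu
          have := sizeOf_mem_elems u s hs
          omega
        exact (nf_key hlt N s).1
      have himg : N.nf '' (N.nf '' (Term.aci L).elems) = N.nf '' (Term.aci L).elems := by
        ext x
        simp only [Set.mem_image]
        constructor
        · rintro ⟨y, ⟨z, hz, rfl⟩, rfl⟩
          exact ⟨z, hz, (IH z hz).symm⟩
        · rintro ⟨y, hy, rfl⟩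
          exact ⟨N.nf y, ⟨y, hy, rfl⟩, IH y hy⟩
      by_cases hsing : ∃ t', N.nf '' (Term.aci L).elems = {t'}
      · obtain ⟨t', ht'⟩ := hsing
        have hnf : N.nf (.aci L) = t' := N.nf_aci_single L t' ht'
        have : t' ∈ N.nf '' (Term.aci L).elems := by rw [ht']; rfl
        obtain ⟨s, hs, rfl⟩ := this
        have hna : NAaci (N.nf s) := na_nf N (na_mem_elems _ s hs)
        have hid : N.nf (N.nf (.aci L)) = N.nf (.aci L) := by
          rw [hnf]; exact IH s hs
        refine ⟨hid, ?_⟩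
        rw [hnf, elems_na hna, Set.image_singleton, IH s hs, ht']
      · obtain ⟨L', hpw, hmem, hnf⟩ := N.nf_aci L hsing
        have hsetL' : (Term.aci L').elems = {s | s ∈ L'} := by
          rw [elems_aci]
          ext x
          simp only [Set.mem_iUnion, Set.mem_setOf_eq]
          constructor
          · rintro ⟨u, hu, hx⟩
            obtain ⟨z, hz, rfl⟩ := (hmem u).1 hu
            rw [elems_na (na_nf N (na_mem_elems _ z hz))] at hx
            rw [hx]; exact hu
          · intro hx
            refine ⟨x, hx, ?_⟩
            obtain ⟨z, hz, rfl⟩ := (hmem x).1 hx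
            rw [elems_na (na_nf N (na_mem_elems _ z hz))]; rfl
        have hset2 : {s | s ∈ L'} = N.nf '' (Term.aci L).elems := by
          ext x; simp only [Set.mem_setOf_eq]; exact hmem x
        have himg2 : N.nf '' (Term.aci L').elems = N.nf '' (Term.aci L).elems := by
          rw [hsetL', hset2, himg]
        have hsing2 : ¬ ∃ t', N.nf '' (Term.aci L').elems = {t'} := by
          rw [himg2]; exact hsing
        obtain ⟨L'', hpw'', hmem'', hnf''⟩ := N.nf_aci L' hsing2
        have : L'' = L' := by
          apply sorted_unique hlt hpw'' hpw
          intro s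
          rw [hmem'' s, himg2, ← hset2]
          rfl
        have hid : N.nf (N.nf (.aci L)) = N.nf (.aci L) := by
          rw [hnf, hnf'', this]
        refine ⟨hid, ?_⟩
        rw [hnf, himg2]
termination_by t => sizeOf t
decreasing_by all_goals (simp_wf; try omega)

end AuxACI

/-- Normalizing the members of an ACI list does not change the normal form. -/
theorem norm_aci_map_norm (lt : Term → Term → Prop) (hlt : IsStrictTotalOrder Term lt)
    (N : NormSpec lt) : ∀ L : List Term, L ≠ [] →
      N.nf (.aci (L.map N.nf)) = N.nf (.aci L) := by
  intro L _
  have hE : N.nf '' (Term.aci (L.map N.nf)).elems = N.nf '' (Term.aci L).elems := by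
    rw [elems_aci, elems_aci]
    ext x
    simp only [Set.mem_image, Set.mem_iUnion, List.mem_map]
    constructor
    · rintro ⟨y, ⟨u, ⟨t, ht, rfl⟩, hy⟩, rfl⟩
      have : N.nf y ∈ N.nf '' t.elems := by
        rw [← (nf_key hlt N t).2]
        exact ⟨y, hy, rfl⟩
      obtain ⟨z, hz, hzy⟩ := this
      exact ⟨z, ⟨t, ht, hz⟩, hzy⟩
    · rintro ⟨y, ⟨t, ht, hy⟩, rfl⟩
      have : N.nf y ∈ N.nf '' (N.nf t).elems := by
        rw [(nf_key hlt N t).2]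
        exact ⟨y, hy, rfl⟩
      obtain ⟨z, hz, hzy⟩ := this
      exact ⟨z, ⟨N.nf t, ⟨t, ht, rfl⟩, hz⟩, hzy⟩
  by_cases hsing : ∃ t', N.nf '' (Term.aci L).elems = {t'}
  · obtain ⟨t', ht'⟩ := hsing
    rw [N.nf_aci_single L t' ht', N.nf_aci_single (L.map N.nf) t' (by rw [hE, ht'])]
  · obtain ⟨L₁, hpw₁, hmem₁, hnf₁⟩ := N.nf_aci L hsing
    obtain ⟨L₂, hpw₂, hmem₂, hnf₂⟩ := N.nf_aci (L.map N.nf) (by rw [hE]; exact hsing)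
    rw [hnf₁, hnf₂]
    congr 1
    apply sorted_unique hlt hpw₂ hpw₁
    intro s
    rw [hmem₂ s, hmem₁ s, hE]
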